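/- Let A and H be real symmetric n×n matrices, let 0 < μ ≤ L and α > 0 with αμ ≤ 1, and suppose A is positive semidefinite with ‖A‖ + αL ≤ 1, and μ I ⪯ H ⪯ L I. Then the spectral norm satisfies ‖I − A − αH‖ ≤ 1 − αμ. -/

import Mathlib

/-- The spectral norm of an `n × n` real matrix, i.e. the operator norm of the induced
linear map on Euclidean space. -/
noncomputable def matSpectralNorm {n : ℕ} (M : Matrix (Fin n) (Fin n) ℝ) : ℝ :=
  ‖Matrix.toEuclideanCLM (𝕜 := ℝ) M‖

open Matrix
open scoped InnerProductSpace

lemma toECLM_apply {n : ℕ} (P : Matrix (Fin n) (Fin n) ℝ) (x : EuclideanSpace ℝ (Fin n))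
    (i : Fin n) :
    (Matrix.toEuclideanCLM (𝕜 := ℝ) P) x i = P.mulVec ((WithLp.equiv 2 (Fin n → ℝ)) x) i := by
  have : (Matrix.toEuclideanCLM (𝕜 := ℝ) P) x = Matrix.toEuclideanLin P x := rfl
  rw [this, Matrix.toEuclideanLin_apply]
  rfl

lemma quad_nonneg {n : ℕ} (P : Matrix (Fin n) (Fin n) ℝ) (hP : P.PosSemidef)
    (x : EuclideanSpace ℝ (Fin n)) :
    0 ≤ ⟪(Matrix.toEuclideanCLM (𝕜 := ℝ) P) x, x⟫_ℝ := by
  have h := hP.dotProduct_mulVec_nonneg ((WithLp.equiv 2 (Fin n → ℝ)) x)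
  simp only [RCLike.re_to_real, star_trivial] at h
  convert h using 1
  · rfl
  simp [PiLp.inner_apply, toECLM_apply, dotProduct, mul_comm]

lemma opnorm_le_of_quad {n : ℕ}
    {T : EuclideanSpace ℝ (Fin n) →L[ℝ] EuclideanSpace ℝ (Fin n)}
    (hT : LinearMap.IsSymmetric (T : EuclideanSpace ℝ (Fin n) →ₗ[ℝ] EuclideanSpace ℝ (Fin n)))
    {c : ℝ} (hc : 0 ≤ c) (h : ∀ x : EuclideanSpace ℝ (Fin n), |⟪T x, x⟫_ℝ| ≤ c * ‖x‖ ^ 2) :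
    ‖T‖ ≤ c := by
  have hn : Module.finrank ℝ (EuclideanSpace ℝ (Fin n)) = n := finrank_euclideanSpace_fin
  set B := hT.eigenvectorBasis hn with hB
  set μ := hT.eigenvalues hn with hμ
  have hnormsq : ∀ y : EuclideanSpace ℝ (Fin n), ‖y‖ ^ 2 = ∑ i, (B.repr y i) ^ 2 := by
    intro y
    rw [← B.repr.norm_map y, EuclideanSpace.norm_eq, Real.sq_sqrt (by positivity)]
    simp [sq_abs]
  have hev : ∀ i, |μ i| ≤ c := by
    intro i
    have hbi : ‖B i‖ = 1 := B.orthonormal.1 i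
    have h1 := h (B i)
    have h2 : ⟪T (B i), B i⟫_ℝ = μ i := by
      have := hT.apply_eigenvectorBasis hn i
      show ⟪(T : EuclideanSpace ℝ (Fin n) →ₗ[ℝ] EuclideanSpace ℝ (Fin n)) (B i), B i⟫_ℝ = μ i
      rw [this, real_inner_smul_left, real_inner_self_eq_norm_sq, hbi]
      simp [hμ]
    rw [h2, hbi] at h1
    simpa using h1
  refine T.opNorm_le_bound hc fun x => ?_
  have key : ‖T x‖ ^ 2 ≤ (c * ‖x‖) ^ 2 := by
    rw [hnormsq (T x), mul_pow, hnormsq x, Finset.mul_sum]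
    apply Finset.sum_le_sum
    intro i _
    have h3 : B.repr (T x) i = μ i * B.repr x i := hT.eigenvectorBasis_apply_self_apply hn x i
    rw [h3, mul_pow]
    have : μ i ^ 2 ≤ c ^ 2 := by
      rw [← sq_abs (μ i)]
      exact pow_le_pow_left₀ (abs_nonneg _) (hev i) 2
    nlinarith [sq_nonneg (B.repr x i)]
  calc ‖T x‖ = Real.sqrt (‖T x‖ ^ 2) := (Real.sqrt_sq (norm_nonneg _)).symm
    _ ≤ Real.sqrt ((c * ‖x‖) ^ 2) := Real.sqrt_le_sqrt key
    _ = c * ‖x‖ := Real.sqrt_sq (by positivity)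

/-- The matrix contraction estimate `‖I - A - αH‖ ≤ 1 - αμ` used in the analysis:
if `A` is symmetric positive semidefinite with `‖A‖ + αL ≤ 1` and `μI ⪯ H ⪯ LI`
with `0 < μ ≤ L`, `α > 0`, `αμ ≤ 1`, then `I - A - αH` contracts with factor `1 - αμ`
in spectral norm. -/
theorem contraction_estimate {n : ℕ}
    (A H : Matrix (Fin n) (Fin n) ℝ)
    (hA_symm : A.IsSymm) (hH_symm : H.IsSymm)
    (μ L α : ℝ) (hμ : 0 < μ) (hμL : μ ≤ L) (hα : 0 < α) (hαμ : α * μ ≤ 1)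
    (hA_psd : A.PosSemidef)
    (hA_norm : matSpectralNorm A + α * L ≤ 1)
    (hH_lower : (H - μ • (1 : Matrix (Fin n) (Fin n) ℝ)).PosSemidef)
    (hH_upper : (L • (1 : Matrix (Fin n) (Fin n) ℝ) - H).PosSemidef) :
    matSpectralNorm (1 - A - α • H) ≤ 1 - α * μ := by
  set M : Matrix (Fin n) (Fin n) ℝ := 1 - A - α • H with hM
  have hM_symm : M.IsSymm := by
    unfold Matrix.IsSymm at *
    rw [hM, Matrix.transpose_sub, Matrix.transpose_sub, Matrix.transpose_one,
      Matrix.transpose_smul, hA_symm, hH_symm]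
  have hM_herm : M.IsHermitian := by
    rwa [Matrix.IsHermitian, conjTranspose_eq_transpose_of_trivial]
  have hT_symm : LinearMap.IsSymmetric
      ((Matrix.toEuclideanCLM (𝕜 := ℝ) M :
          EuclideanSpace ℝ (Fin n) →L[ℝ] EuclideanSpace ℝ (Fin n)) :
        EuclideanSpace ℝ (Fin n) →ₗ[ℝ] EuclideanSpace ℝ (Fin n)) := by
    have := Matrix.isHermitian_iff_isSymmetric.mp hM_herm
    exact this
  have hc : (0 : ℝ) ≤ 1 - α * μ := by linarith
  refine opnorm_le_of_quad hT_symm hc fun x => ?_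
  have hexp : ⟪(Matrix.toEuclideanCLM (𝕜 := ℝ) M) x, x⟫_ℝ
      = ‖x‖ ^ 2 - ⟪(Matrix.toEuclideanCLM (𝕜 := ℝ) A) x, x⟫_ℝ
        - α * ⟪(Matrix.toEuclideanCLM (𝕜 := ℝ) H) x, x⟫_ℝ := by
    rw [hM, map_sub, map_sub, _root_.map_one, _root_.map_smul]
    simp only [ContinuousLinearMap.sub_apply, ContinuousLinearMap.one_apply,
      ContinuousLinearMap.smul_apply, inner_sub_left, real_inner_smul_left,
      real_inner_self_eq_norm_sq]
  set qA := ⟪(Matrix.toEuclideanCLM (𝕜 := ℝ) A) x, x⟫_ℝ with hqA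
  set qH := ⟪(Matrix.toEuclideanCLM (𝕜 := ℝ) H) x, x⟫_ℝ with hqH
  have hqA0 : 0 ≤ qA := quad_nonneg A hA_psd x
  have hqA1 : qA ≤ matSpectralNorm A * ‖x‖ ^ 2 := by
    calc qA ≤ ‖(Matrix.toEuclideanCLM (𝕜 := ℝ) A) x‖ * ‖x‖ := real_inner_le_norm _ _
      _ ≤ ‖Matrix.toEuclideanCLM (𝕜 := ℝ) A‖ * ‖x‖ * ‖x‖ := by
          have := (Matrix.toEuclideanCLM (𝕜 := ℝ) A).le_opNorm x
          nlinarith [norm_nonneg x]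
      _ = matSpectralNorm A * ‖x‖ ^ 2 := by rw [matSpectralNorm]; ring
  have hqH1 : μ * ‖x‖ ^ 2 ≤ qH := by
    have h0 := quad_nonneg _ hH_lower x
    rw [map_sub, _root_.map_smul, _root_.map_one] at h0
    simp only [ContinuousLinearMap.sub_apply, ContinuousLinearMap.smul_apply,
      ContinuousLinearMap.one_apply, inner_sub_left, real_inner_smul_left,
      real_inner_self_eq_norm_sq] at h0
    linarith
  have hqH2 : qH ≤ L * ‖x‖ ^ 2 := by
    have h0 := quad_nonneg _ hH_upper x
    rw [map_sub, _root_.map_smul, _root_.map_one] at h0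
    simp only [ContinuousLinearMap.sub_apply, ContinuousLinearMap.smul_apply,
      ContinuousLinearMap.one_apply, inner_sub_left, real_inner_smul_left,
      real_inner_self_eq_norm_sq] at h0
    linarith
  rw [hexp, abs_le]
  have hx2 : (0 : ℝ) ≤ ‖x‖ ^ 2 := sq_nonneg _
  have hAn : 0 ≤ matSpectralNorm A := norm_nonneg _
  constructor
  · nlinarith
  · nlinarith
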